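/- Let Z ≥ 0 be a bounded random variable with z := ‖Z‖_∞ > 0. Then for every integer k ≥ 0, lim_{n→∞} E[Z^{n+k}] / E[Z^n] = z^k. -/

import Mathlib

open MeasureTheory Filter

/-- For a bounded nonnegative random variable `Z` with essential supremum
`z = essSup Z > 0`, for every `k`, `E[Z^{n+k}] / E[Z^n] → z^k` as `n → ∞`. -/
theorem stmt_1 {Ω : Type*} [MeasurableSpace Ω] (μ : Measure Ω) [IsProbabilityMeasure μ]
    (Z : Ω → ℝ) (hZm : Measurable Z) (M : ℝ)
    (hZ0 : ∀ᵐ ω ∂μ, 0 ≤ Z ω) (hZM : ∀ᵐ ω ∂μ, Z ω ≤ M)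
    (hz : 0 < essSup Z μ) (k : ℕ) :
    Tendsto (fun n : ℕ => (∫ ω, Z ω ^ (n + k) ∂μ) / ∫ ω, Z ω ^ n ∂μ)
      atTop (nhds ((essSup Z μ) ^ k)) := by
  set z := essSup Z μ with hzdef
  have hbdd : IsBoundedUnder (· ≤ ·) (ae μ) Z := ⟨M, hZM⟩
  have hZz : ∀ᵐ ω ∂μ, Z ω ≤ z := ae_le_essSup hbdd
  -- integrability
  have hM0 : 0 ≤ M := by
    obtain ⟨ω, h0, hM⟩ := (hZ0.and hZM).exists
    linarith
  have hint : ∀ n : ℕ, Integrable (fun ω => Z ω ^ n) μ := by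
    intro n
    refine ⟨(hZm.pow_const n).aestronglyMeasurable, ?_⟩
    apply HasFiniteIntegral.of_bounded (C := M ^ n)
    filter_upwards [hZ0, hZM] with ω h0 hM'
    rw [Real.norm_eq_abs, abs_of_nonneg (pow_nonneg h0 n)]
    exact pow_le_pow_left₀ h0 hM' n
  -- positivity of the measure of {c ≤ Z} for c < z
  have hposA : ∀ c : ℝ, c < z → 0 < μ {ω | c ≤ Z ω} := by
    intro c hc
    by_cases h : μ {ω | c ≤ Z ω} = 0
    case neg => exact pos_iff_ne_zero.mpr h
    · exfalso
      have hae : ∀ᵐ ω ∂μ, Z ω ≤ c := by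
        have : μ {ω | ¬ Z ω ≤ c} = 0 := by
          refine measure_mono_null ?_ h
          intro ω hω
          exact le_of_lt (not_le.mp hω)
        exact (ae_iff).2 this
      have : z ≤ c :=
        limsup_le_of_le (isCoboundedUnder_le_of_eventually_le _ hZ0) hae
      exact absurd hc (not_lt.mpr this)
  -- lower bound for the integral
  have hlow : ∀ c : ℝ, 0 ≤ c → ∀ n : ℕ,
      c ^ n * (μ {ω | c ≤ Z ω}).toReal ≤ ∫ ω, Z ω ^ n ∂μ := by
    intro c hc n
    set A := {ω | c ≤ Z ω} with hA
    have hAm : MeasurableSet A := measurableSet_le measurable_const hZm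
    have h1 : c ^ n * (μ A).toReal ≤ ∫ ω in A, Z ω ^ n ∂μ := by
      rw [mul_comm, ← smul_eq_mul, ← Measure.real_def, ← setIntegral_const]
      refine setIntegral_mono_on (integrable_const _).integrableOn
        (hint n).integrableOn hAm ?_
      intro x hx
      exact pow_le_pow_left₀ hc hx n
    have h2 : ∫ ω in A, Z ω ^ n ∂μ ≤ ∫ ω, Z ω ^ n ∂μ := by
      refine setIntegral_le_integral (hint n) ?_
      filter_upwards [hZ0] with ω h0
      exact pow_nonneg h0 n
    linarith
  -- positivity of integrals
  have hIpos : ∀ n : ℕ, 0 < ∫ ω, Z ω ^ n ∂μ := by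
    intro n
    have hhalf : (0:ℝ) < z / 2 := by linarith
    have hp : 0 < (μ {ω | z / 2 ≤ Z ω}).toReal := by
      refine ENNReal.toReal_pos (ne_of_gt (hposA _ (by linarith))) (measure_ne_top _ _)
    calc (0:ℝ) < (z/2) ^ n * (μ {ω | z/2 ≤ Z ω}).toReal := by positivity
    _ ≤ _ := hlow _ (le_of_lt hhalf) n
  -- upper bound: I_{n+k} ≤ z^k I_n
  have hup : ∀ n : ℕ, (∫ ω, Z ω ^ (n + k) ∂μ) ≤ z ^ k * ∫ ω, Z ω ^ n ∂μ := by
    intro n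
    rw [← integral_const_mul]
    refine integral_mono_ae (hint (n+k)) ((hint n).const_mul _) ?_
    filter_upwards [hZ0, hZz] with ω h0 hzω
    calc Z ω ^ (n + k) = Z ω ^ k * Z ω ^ n := by ring
    _ ≤ z ^ k * Z ω ^ n :=
      mul_le_mul_of_nonneg_right (pow_le_pow_left₀ h0 hzω k) (pow_nonneg h0 n)
  -- key lower bound: I_{n+k} ≥ c^k (I_n - c^n) for 0 ≤ c
  have hkey : ∀ c : ℝ, 0 ≤ c → ∀ n : ℕ,
      c ^ k * ((∫ ω, Z ω ^ n ∂μ) - c ^ n) ≤ ∫ ω, Z ω ^ (n + k) ∂μ := by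
    intro c hc n
    set A := {ω | c ≤ Z ω} with hA
    have hAm : MeasurableSet A := measurableSet_le measurable_const hZm
    -- ∫_{Aᶜ} Z^n ≤ c^n
    have h3 : ∫ ω in Aᶜ, Z ω ^ n ∂μ ≤ c ^ n := by
      have h31 : ∫ ω in Aᶜ, Z ω ^ n ∂μ ≤ ∫ _ω in Aᶜ, c ^ n ∂μ := by
        refine integral_mono_ae (hint n).integrableOn
          (integrable_const _).integrableOn ?_
        filter_upwards [ae_restrict_mem hAm.compl, ae_restrict_of_ae hZ0] with ω hω h0
        have : Z ω < c := by simpa [hA] using hω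
        exact pow_le_pow_left₀ h0 (le_of_lt this) n
      have h32 : ∫ _ω in Aᶜ, c ^ n ∂μ ≤ c ^ n := by
        rw [setIntegral_const, smul_eq_mul, Measure.real_def]
        have h1 : (μ Aᶜ).toReal ≤ 1 := by
          rw [show (1:ℝ) = (μ Set.univ).toReal by simp]
          exact ENNReal.toReal_mono (measure_ne_top _ _) (measure_mono (Set.subset_univ _))
        nlinarith [pow_nonneg hc n, ENNReal.toReal_nonneg (a := μ Aᶜ)]
      linarith
    -- ∫_A Z^{n+k} ≥ c^k ∫_A Z^n
    have h4 : c ^ k * ∫ ω in A, Z ω ^ n ∂μ ≤ ∫ ω in A, Z ω ^ (n + k) ∂μ := by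
      rw [← integral_const_mul]
      refine integral_mono_ae ((hint n).integrableOn.const_mul _)
        (hint (n+k)).integrableOn ?_
      filter_upwards [ae_restrict_mem hAm, ae_restrict_of_ae hZ0] with ω hω h0
      have hcω : c ≤ Z ω := hω
      calc c ^ k * Z ω ^ n ≤ Z ω ^ k * Z ω ^ n :=
        mul_le_mul_of_nonneg_right (pow_le_pow_left₀ hc hcω k) (pow_nonneg h0 n)
      _ = Z ω ^ (n + k) := by ring
    have h5 : ∫ ω in A, Z ω ^ (n + k) ∂μ ≤ ∫ ω, Z ω ^ (n + k) ∂μ := by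
      refine setIntegral_le_integral (hint (n+k)) ?_
      filter_upwards [hZ0] with ω h0
      exact pow_nonneg h0 _
    have h6 : (∫ ω in A, Z ω ^ n ∂μ) + ∫ ω in Aᶜ, Z ω ^ n ∂μ = ∫ ω, Z ω ^ n ∂μ :=
      integral_add_compl hAm (hint n)
    nlinarith [pow_nonneg hc k]
  -- now the limit
  rw [Metric.tendsto_atTop]
  intro η hη
  -- choose c ∈ (z/2, z) with z^k - η/2 < c^k
  have hcont : ∀ᶠ x in nhdsWithin z (Set.Iio z),
      z ^ k - η / 2 < x ^ k ∧ z / 2 < x ∧ x < z := by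
    have h1 : ∀ᶠ x in nhds z, z ^ k - η / 2 < x ^ k := by
      have := ((continuous_pow k).tendsto z).eventually
        (eventually_gt_nhds (show z ^ k - η / 2 < z ^ k by linarith))
      exact this
    have h2 : ∀ᶠ x in nhds z, z / 2 < x := eventually_gt_nhds (by linarith)
    filter_upwards [nhdsWithin_le_nhds h1, nhdsWithin_le_nhds h2,
      self_mem_nhdsWithin] with x hx1 hx2 hx3
    exact ⟨hx1, hx2, hx3⟩
  obtain ⟨c, hc1, hc2, hc3⟩ := hcont.exists
  have hc0 : 0 < c := by linarith
  set c' := (c + z) / 2 with hc'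
  have hcc' : c < c' := by simp only [hc']; linarith
  have hc'z : c' < z := by simp only [hc']; linarith
  have hc'0 : 0 < c' := by linarith
  have hp : 0 < (μ {ω | c' ≤ Z ω}).toReal :=
    ENNReal.toReal_pos (ne_of_gt (hposA _ hc'z)) (measure_ne_top _ _)
  set p := (μ {ω | c' ≤ Z ω}).toReal with hpdef
  -- δ n := c^n / I_n → 0
  have hδ : Tendsto (fun n : ℕ => c ^ n / ∫ ω, Z ω ^ n ∂μ) atTop (nhds 0) := by
    have hbound : ∀ n : ℕ, c ^ n / (∫ ω, Z ω ^ n ∂μ) ≤ (c / c') ^ n / p := by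
      intro n
      have hl : c' ^ n * p ≤ ∫ ω, Z ω ^ n ∂μ := hlow c' (le_of_lt hc'0) n
      rw [div_pow, div_div]
      refine div_le_div_of_nonneg_left (pow_nonneg (le_of_lt hc0) n) ?_ hl
      positivity
    have hratio : Tendsto (fun n : ℕ => (c / c') ^ n / p) atTop (nhds 0) := by
      have : Tendsto (fun n : ℕ => (c / c') ^ n) atTop (nhds 0) :=
        tendsto_pow_atTop_nhds_zero_of_lt_one (by positivity)
          ((div_lt_one hc'0).mpr hcc')
      simpa using this.div_const p
    refine squeeze_zero (fun n => ?_) hbound hratio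
    have := hIpos n
    positivity
  have hL : Tendsto (fun n : ℕ => c ^ k * (1 - c ^ n / ∫ ω, Z ω ^ n ∂μ)) atTop
      (nhds (c ^ k)) := by
    have := ((tendsto_const_nhds (x := (1:ℝ)) (f := atTop)).sub hδ).const_mul (c ^ k)
    simpa using this
  have hev : ∀ᶠ n : ℕ in atTop,
      z ^ k - η < c ^ k * (1 - c ^ n / ∫ ω, Z ω ^ n ∂μ) :=
    hL.eventually (eventually_gt_nhds (by linarith))
  obtain ⟨N, hN⟩ := hev.exists_forall_of_atTop
  refine ⟨N, fun n hn => ?_⟩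
  have hIn := hIpos n
  have hLn := hN n hn
  have hRu : (∫ ω, Z ω ^ (n + k) ∂μ) / ∫ ω, Z ω ^ n ∂μ ≤ z ^ k :=
    (div_le_iff₀ hIn).mpr (by linarith [hup n])
  have hRl : c ^ k * (1 - c ^ n / ∫ ω, Z ω ^ n ∂μ) ≤
      (∫ ω, Z ω ^ (n + k) ∂μ) / ∫ ω, Z ω ^ n ∂μ := by
    have h1 : c ^ k * ((∫ ω, Z ω ^ n ∂μ) - c ^ n) / ∫ ω, Z ω ^ n ∂μ ≤
        (∫ ω, Z ω ^ (n + k) ∂μ) / ∫ ω, Z ω ^ n ∂μ :=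
      (div_le_div_iff_of_pos_right hIn).mpr (hkey c (le_of_lt hc0) n)
    have h2 : c ^ k * ((∫ ω, Z ω ^ n ∂μ) - c ^ n) / ∫ ω, Z ω ^ n ∂μ =
        c ^ k * (1 - c ^ n / ∫ ω, Z ω ^ n ∂μ) := by
      field_simp
    linarith [h1, h2.symm.le, h2.le]
  rw [Real.dist_eq, abs_lt]
  constructor <;> linarith
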